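/- arXiv:2212.14463 — 4 statements merged into one kernel-verified Lean document; each statement's English description precedes it below -/
import Mathlib

section
/- For every propositional formula β: β is a theorem of Łukasiewicz's proof system (⊢_Ł β) if and only if there exists a justification term t such that t:β is a theorem of the system JLŁ (⊢_JLŁ t:β). -/
/-- Propositional formulas built from countably many atoms with ¬ and →. -/
inductive PropForm : Type
  | atom : ℕ → PropForm
  | neg  : PropForm → PropForm
  | imp  : PropForm → PropForm → PropForm

/-- Łukasiewicz's Hilbert system: axioms L1, L2, L3 and modus ponens;
derivation from a set of premises `Γ`. -/
inductive LukDeriv : Set PropForm → PropForm → Prop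
  | prem {Γ φ} : φ ∈ Γ → LukDeriv Γ φ
  | ax1 {Γ} (φ ψ : PropForm) : LukDeriv Γ (φ.imp (ψ.imp φ))
  | ax2 {Γ} (φ ψ χ : PropForm) :
      LukDeriv Γ ((φ.imp (ψ.imp χ)).imp ((φ.imp ψ).imp (φ.imp χ)))
  | ax3 {Γ} (φ ψ : PropForm) :
      LukDeriv Γ (((φ.neg).imp (ψ.neg)).imp (ψ.imp φ))
  | mp {Γ φ ψ} : LukDeriv Γ (φ.imp ψ) → LukDeriv Γ φ → LukDeriv Γ ψ

/-- Justification terms: constants, variables, application and sum. -/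
inductive JTerm : Type
  | const : ℕ → JTerm
  | var   : ℕ → JTerm
  | app   : JTerm → JTerm → JTerm
  | sum   : JTerm → JTerm → JTerm

/-- Justification formulas: propositional formulas extended with `t : φ`. -/
inductive JForm : Type
  | atom : ℕ → JForm
  | neg  : JForm → JForm
  | imp  : JForm → JForm → JForm
  | just : JTerm → JForm → JForm

/-- Embedding of propositional formulas into justification formulas. -/
def PropForm.toJ : PropForm → JForm
  | .atom n  => .atom n
  | .neg φ   => .neg φ.toJ
  | .imp φ ψ => .imp φ.toJ ψ.toJ

/-- Schematic constant specification: a distinguished constant for each of the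
three Łukasiewicz axiom schemes. -/
def c1 : JTerm := .const 1
def c2 : JTerm := .const 2
def c3 : JTerm := .const 3

/-- The system JLŁ: the Application and Sum axioms, justified Łukasiewicz axioms
(with schematic constant specification `c1, c2, c3`), modus ponens and
application introduction; derivation from a set of premises `Γ`. -/
inductive JLDeriv : Set JForm → JForm → Prop
  | prem {Γ φ} : φ ∈ Γ → JLDeriv Γ φ
  | appAx {Γ} (s t : JTerm) (φ ψ : JForm) :
      JLDeriv Γ ((JForm.just s (φ.imp ψ)).imp
        ((JForm.just t φ).imp (JForm.just (s.app t) ψ)))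
  | sumL {Γ} (s t : JTerm) (ψ : JForm) :
      JLDeriv Γ ((JForm.just s ψ).imp (JForm.just (s.sum t) ψ))
  | sumR {Γ} (s t : JTerm) (ψ : JForm) :
      JLDeriv Γ ((JForm.just t ψ).imp (JForm.just (s.sum t) ψ))
  | jax1 {Γ} (φ ψ : JForm) :
      JLDeriv Γ (JForm.just c1 (φ.imp (ψ.imp φ)))
  | jax2 {Γ} (φ ψ χ : JForm) :
      JLDeriv Γ (JForm.just c2 ((φ.imp (ψ.imp χ)).imp ((φ.imp ψ).imp (φ.imp χ))))
  | jax3 {Γ} (φ ψ : JForm) :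
      JLDeriv Γ (JForm.just c3 (((φ.neg).imp (ψ.neg)).imp (ψ.imp φ)))
  | mp {Γ φ ψ} : JLDeriv Γ (φ.imp ψ) → JLDeriv Γ φ → JLDeriv Γ ψ
  | appIntro {Γ} {s t : JTerm} {φ ψ : JForm} :
      JLDeriv Γ (JForm.just s (φ.imp ψ)) → JLDeriv Γ (JForm.just t φ) →
      JLDeriv Γ (JForm.just (s.app t) ψ)

/-- Forgetful map erasing justification terms. -/
def JForm.forget : JForm → PropForm
  | .atom n => .atom n
  | .neg φ => .neg φ.forget
  | .imp φ ψ => .imp φ.forget ψ.forget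
  | .just _ φ => φ.forget

lemma forget_toJ (φ : PropForm) : φ.toJ.forget = φ := by
  induction φ <;> simp [PropForm.toJ, JForm.forget, *]

lemma lukId (Γ : Set PropForm) (φ : PropForm) : LukDeriv Γ (φ.imp φ) := by
  have h1 := LukDeriv.ax2 (Γ := Γ) φ (φ.imp φ) φ
  have h2 := LukDeriv.ax1 (Γ := Γ) φ (φ.imp φ)
  have h3 := LukDeriv.ax1 (Γ := Γ) φ φ
  exact (h1.mp h2).mp h3

lemma jl_sound {φ : JForm} (h : JLDeriv ∅ φ) : LukDeriv ∅ φ.forget := by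
  induction h with
  | prem h => exact absurd h (Set.notMem_empty _)
  | appAx s t φ ψ => exact lukId _ _
  | sumL s t ψ => exact lukId _ _
  | sumR s t ψ => exact lukId _ _
  | jax1 φ ψ => exact LukDeriv.ax1 _ _
  | jax2 φ ψ χ => exact LukDeriv.ax2 _ _ _
  | jax3 φ ψ => exact LukDeriv.ax3 _ _
  | mp _ _ ih1 ih2 => exact ih1.mp ih2
  | appIntro _ _ ih1 ih2 => exact ih1.mp ih2

/-- `⊢_Ł β` iff there is a justification term `t` with `⊢_JLŁ t:β`. -/
theorem luk_iff_justified (β : PropForm) :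
    LukDeriv ∅ β ↔ ∃ t : JTerm, JLDeriv ∅ (JForm.just t β.toJ) := by
  constructor
  · intro h
    induction h with
    | prem h => exact absurd h (Set.notMem_empty _)
    | ax1 φ ψ => exact ⟨c1, JLDeriv.jax1 _ _⟩
    | ax2 φ ψ χ => exact ⟨c2, JLDeriv.jax2 _ _ _⟩
    | ax3 φ ψ => exact ⟨c3, JLDeriv.jax3 _ _⟩
    | mp _ _ ih1 ih2 =>
      obtain ⟨s, hs⟩ := ih1
      obtain ⟨t, ht⟩ := ih2
      exact ⟨s.app t, JLDeriv.appIntro hs ht⟩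
  · rintro ⟨t, ht⟩
    have := jl_sound ht
    simpa [JForm.forget, forget_toJ] using this
end

section
/- (Internalization for JLŁ.) If a propositional formula β is a theorem of Łukasiewicz's proof system (⊢_Ł β), then there exists a justification term t, built only from constants by application, such that ⊢_JLŁ t:β. -/
/-- Terms built only from constants by application. -/
def JTerm.ConstApp : JTerm → Prop
  | .const _ => True
  | .var _   => False
  | .app s t => s.ConstApp ∧ t.ConstApp
  | .sum _ _ => False

/-- Internalization for JLŁ: if `⊢_Ł β` then there is a term `t`,
built only from constants by application, with `⊢_JLŁ t:β`. -/
theorem internalization (β : PropForm) (h : LukDeriv ∅ β) :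
    ∃ t : JTerm, t.ConstApp ∧ JLDeriv ∅ (JForm.just t β.toJ) := by
  induction h with
  | prem h => exact absurd h (Set.notMem_empty _)
  | ax1 φ ψ => exact ⟨c1, trivial, JLDeriv.jax1 _ _⟩
  | ax2 φ ψ χ => exact ⟨c2, trivial, JLDeriv.jax2 _ _ _⟩
  | ax3 φ ψ => exact ⟨c3, trivial, JLDeriv.jax3 _ _⟩
  | mp h1 h2 ih1 ih2 =>
    obtain ⟨s, hs, ds⟩ := ih1
    obtain ⟨t, ht, dt⟩ := ih2
    exact ⟨s.app t, ⟨hs, ht⟩, JLDeriv.appIntro ds dt⟩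
end

section
/- If x₁:α₁, …, xₙ:αₙ ⊢_JLŁ t:β for some justification term t, distinct justification variables x₁, …, xₙ, and propositional formulas α₁, …, αₙ, β, then α₁, …, αₙ ⊢_Ł β in Łukasiewicz's proof system; in particular, in the structural induction on t the new base case is t a variable xᵢ, in which case β = αᵢ is a premise and trivially αᵢ ⊢_Ł αᵢ. -/
/-- Forgetful projection erasing justification terms. -/
def JForm.erase : JForm → PropForm
  | .atom n  => .atom n
  | .neg φ   => .neg φ.erase
  | .imp φ ψ => .imp φ.erase ψ.erase
  | .just _ φ => φ.erase

lemma erase_toJ : ∀ φ : PropForm, φ.toJ.erase = φ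
  | .atom _ => rfl
  | .neg φ => by simp [PropForm.toJ, JForm.erase, erase_toJ φ]
  | .imp φ ψ => by simp [PropForm.toJ, JForm.erase, erase_toJ φ, erase_toJ ψ]

lemma luk_id (Γ : Set PropForm) (A : PropForm) : LukDeriv Γ (A.imp A) :=
  .mp (.mp (.ax2 A (A.imp A) A) (.ax1 A (A.imp A))) (.ax1 A A)

lemma jl_erase {Γ : Set JForm} {φ : JForm} (h : JLDeriv Γ φ) :
    LukDeriv (JForm.erase '' Γ) φ.erase := by
  induction h with
  | prem h => exact .prem ⟨_, h, rfl⟩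
  | appAx s t φ ψ => exact luk_id _ _
  | sumL s t ψ => exact luk_id _ _
  | sumR s t ψ => exact luk_id _ _
  | jax1 φ ψ => exact .ax1 _ _
  | jax2 φ ψ χ => exact .ax2 _ _ _
  | jax3 φ ψ => exact .ax3 _ _
  | mp _ _ ih1 ih2 => exact .mp ih1 ih2
  | appIntro _ _ ih1 ih2 => exact .mp ih1 ih2

/-- if `x₁:α₁, …, xₙ:αₙ ⊢_JLŁ t:β` for some term `t` and distinct
variables `x₁, …, xₙ`, then `α₁, …, αₙ ⊢_Ł β`. -/
theorem inversed_internalization_from_premises (n : ℕ) (α : Fin n → PropForm)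
    (β : PropForm) (t : JTerm) (x : Fin n → ℕ) (hx : Function.Injective x)
    (h : JLDeriv (Set.range fun i => JForm.just (JTerm.var (x i)) (α i).toJ)
      (JForm.just t β.toJ)) :
    LukDeriv (Set.range α) β := by
  have := jl_erase h
  simp only [JForm.erase, erase_toJ] at this
  convert this using 2
  ext γ
  constructor
  · rintro ⟨i, rfl⟩
    exact ⟨_, ⟨i, rfl⟩, (erase_toJ _)⟩
  · rintro ⟨_, ⟨i, rfl⟩, rfl⟩
    exact ⟨i, (erase_toJ _).symm⟩
end

section
/- (Soundness and completeness of JLŁ relative to Łukasiewicz's system, combined form.) For every propositional formula β, the following are equivalent: (i) β is a classical tautology; (ii) ⊢_Ł β; (iii) there exists a justification term t such that ⊢_JLŁ t:β. Here equivalence (i)⇔(ii) is the soundness and completeness of Łukasiewicz's proof system for classical propositional logic, and (ii)⇔(iii) is the correspondence between Ł-theorems and justified JLŁ-theorems. -/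
/-- Classical evaluation of a propositional formula under a valuation. -/
def PropForm.eval (v : ℕ → Bool) : PropForm → Bool
  | .atom n  => v n
  | .neg φ   => !(φ.eval v)
  | .imp φ ψ => !(φ.eval v) || ψ.eval v

/-- A propositional formula is a classical tautology if it is true under every
valuation. -/
def PropForm.Tautology (β : PropForm) : Prop := ∀ v : ℕ → Bool, β.eval v = true

/-! ### Auxiliary material -/

namespace LukAux

lemma weaken {Γ Δ : Set PropForm} {φ} (h : LukDeriv Γ φ) (hs : Γ ⊆ Δ) :
    LukDeriv Δ φ := by
  induction h with
  | prem h => exact .prem (hs h)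
  | ax1 φ ψ => exact .ax1 φ ψ
  | ax2 φ ψ χ => exact .ax2 φ ψ χ
  | ax3 φ ψ => exact .ax3 φ ψ
  | mp _ _ ih1 ih2 => exact .mp ih1 ih2

lemma idd (Γ : Set PropForm) (φ : PropForm) : LukDeriv Γ (φ.imp φ) :=
  .mp (.mp (.ax2 φ (φ.imp φ) φ) (.ax1 φ (φ.imp φ))) (.ax1 φ φ)

lemma ded_aux {Δ : Set PropForm} {ψ : PropForm} (h : LukDeriv Δ ψ) :
    ∀ {Γ : Set PropForm} {φ : PropForm}, Δ = insert φ Γ → LukDeriv Γ (φ.imp ψ) := by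
  induction h with
  | prem h =>
    intro Γ φ hΔ
    subst hΔ
    rcases Set.mem_insert_iff.1 h with h | h
    · cases h; exact idd _ _
    · exact .mp (.ax1 _ _) (.prem h)
  | ax1 a b => intro Γ φ _; exact .mp (.ax1 _ _) (.ax1 a b)
  | ax2 a b c => intro Γ φ _; exact .mp (.ax1 _ _) (.ax2 a b c)
  | ax3 a b => intro Γ φ _; exact .mp (.ax1 _ _) (.ax3 a b)
  | mp _ _ ih1 ih2 =>
    intro Γ φ hΔ
    exact .mp (.mp (.ax2 _ _ _) (ih1 hΔ)) (ih2 hΔ)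

/-- Deduction theorem. -/
lemma ded {Γ : Set PropForm} {φ ψ : PropForm} (h : LukDeriv (insert φ Γ) ψ) :
    LukDeriv Γ (φ.imp ψ) := ded_aux h rfl

lemma syll {Γ : Set PropForm} {φ ψ χ : PropForm} (h1 : LukDeriv Γ (φ.imp ψ))
    (h2 : LukDeriv Γ (ψ.imp χ)) : LukDeriv Γ (φ.imp χ) := by
  apply ded
  exact .mp (weaken h2 (Set.subset_insert _ _))
    (.mp (weaken h1 (Set.subset_insert _ _)) (.prem (Set.mem_insert _ _)))

/-- ¬φ → (φ → ψ) -/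
lemma efq (Γ : Set PropForm) (φ ψ : PropForm) :
    LukDeriv Γ ((φ.neg).imp (φ.imp ψ)) := by
  apply ded
  exact .mp (.ax3 ψ φ) (.mp (.ax1 _ _) (.prem (Set.mem_insert _ _)))

/-- ¬¬φ → φ -/
lemma dne (Γ : Set PropForm) (φ : PropForm) :
    LukDeriv Γ ((φ.neg.neg).imp φ) := by
  apply ded
  have hp : LukDeriv (insert φ.neg.neg Γ) φ.neg.neg := .prem (Set.mem_insert _ _)
  have h1 : LukDeriv (insert φ.neg.neg Γ) ((φ.neg).imp ((φ.imp φ).neg)) :=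
    .mp (efq _ φ.neg ((φ.imp φ).neg)) hp
  exact .mp (.mp (.ax3 φ (φ.imp φ)) h1) (idd _ φ)

/-- φ → ¬¬φ -/
lemma dni (Γ : Set PropForm) (φ : PropForm) :
    LukDeriv Γ (φ.imp φ.neg.neg) :=
  .mp (.ax3 φ.neg.neg φ) (dne Γ φ.neg)

/-- (φ → ψ) → (¬ψ → ¬φ) -/
lemma cp (Γ : Set PropForm) (φ ψ : PropForm) :
    LukDeriv Γ ((φ.imp ψ).imp ((ψ.neg).imp (φ.neg))) := by
  apply ded
  have h : LukDeriv (insert (φ.imp ψ) Γ) ((φ.neg.neg).imp (ψ.neg.neg)) :=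
    syll (syll (dne _ φ) (.prem (Set.mem_insert _ _))) (dni _ ψ)
  exact .mp (.ax3 φ.neg ψ.neg) h

/-- φ → (¬ψ → ¬(φ → ψ)) -/
lemma notImp (Γ : Set PropForm) (φ ψ : PropForm) :
    LukDeriv Γ (φ.imp ((ψ.neg).imp ((φ.imp ψ).neg))) := by
  apply ded; apply ded
  set Γ' := insert ψ.neg (insert φ Γ) with hΓ'
  have h1 : LukDeriv Γ' ((φ.imp ψ).imp ψ) := by
    apply ded
    exact .mp (.prem (Set.mem_insert _ _))
      (.prem (Set.mem_insert_of_mem _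
        (Set.mem_insert_of_mem _ (Set.mem_insert _ _))))
  have h2 : LukDeriv Γ' ((ψ.neg).imp ((φ.imp ψ).neg)) :=
    .mp (cp Γ' (φ.imp ψ) ψ) h1
  exact .mp h2 (.prem (Set.mem_insert _ _))

/-- (φ → ψ) → ((¬φ → ψ) → ψ) -/
lemma caseElim (Γ : Set PropForm) (φ ψ : PropForm) :
    LukDeriv Γ ((φ.imp ψ).imp (((φ.neg).imp ψ).imp ψ)) := by
  apply ded; apply ded
  set Γ₂ := insert ((φ.neg).imp ψ) (insert (φ.imp ψ) Γ) with hΓ₂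
  have key : LukDeriv Γ₂ ((ψ.neg).imp (((φ.neg).imp ψ).neg)) := by
    apply ded
    set Γ₃ := insert ψ.neg Γ₂ with hΓ₃
    have hφψ : LukDeriv Γ₃ (φ.imp ψ) :=
      .prem (Set.mem_insert_of_mem _ (Set.mem_insert_of_mem _ (Set.mem_insert _ _)))
    have hnφ : LukDeriv Γ₃ φ.neg :=
      .mp (.mp (cp Γ₃ φ ψ) hφψ) (.prem (Set.mem_insert _ _))
    exact .mp (.mp (notImp Γ₃ φ.neg ψ) hnφ) (.prem (Set.mem_insert _ _))
  exact .mp (.mp (.ax3 ψ ((φ.neg).imp ψ)) key) (.prem (Set.mem_insert _ _))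

/-- The "literal" of a formula under a valuation. -/
def lit (v : ℕ → Bool) (φ : PropForm) : PropForm :=
  if φ.eval v then φ else φ.neg

/-- Context of literals for atoms below `n`. -/
def ctxN (v : ℕ → Bool) (n : ℕ) : Set PropForm :=
  { ψ | ∃ k < n, ψ = lit v (.atom k) }

def bound : PropForm → ℕ
  | .atom n => n + 1
  | .neg φ => bound φ
  | .imp φ ψ => max (bound φ) (bound ψ)

/-- Kalmár's lemma. -/
lemma kalmar (v : ℕ → Bool) (n : ℕ) :
    ∀ φ : PropForm, bound φ ≤ n → LukDeriv (ctxN v n) (lit v φ) := by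
  intro φ
  induction φ with
  | atom k =>
    intro hk
    exact .prem ⟨k, by simpa [bound] using hk, rfl⟩
  | neg φ ih =>
    intro hb
    have ihφ := ih (by simpa [bound] using hb)
    cases hφ : φ.eval v with
    | true =>
      simp only [lit, PropForm.eval, hφ, if_true, Bool.not_true,
        Bool.false_eq_true, if_false] at ihφ ⊢
      exact .mp (dni _ φ) ihφ
    | false =>
      simp only [lit, PropForm.eval, hφ, Bool.not_false, if_true,
        Bool.false_eq_true, if_false] at ihφ ⊢
      exact ihφ
  | imp φ ψ ihφ ihψ =>
    intro hb
    simp only [bound, max_le_iff] at hb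
    have hφ' := ihφ hb.1
    have hψ' := ihψ hb.2
    cases hφ : φ.eval v with
    | false =>
      simp only [lit, PropForm.eval, hφ, Bool.not_false, Bool.true_or, if_true,
        Bool.false_eq_true, if_false] at hφ' ⊢
      exact .mp (efq _ φ ψ) hφ'
    | true =>
      simp only [lit, PropForm.eval, hφ, if_true] at hφ'
      cases hψ : ψ.eval v with
      | true =>
        simp only [lit, PropForm.eval, hφ, hψ, Bool.not_true, Bool.false_or,
          if_true] at hψ' ⊢
        exact .mp (.ax1 ψ φ) hψ'
      | false =>
        simp only [lit, PropForm.eval, hφ, hψ, Bool.not_true, Bool.false_or,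
          Bool.false_eq_true, if_false] at hψ' ⊢
        exact .mp (.mp (notImp _ φ ψ) hφ') hψ'

lemma ctxN_update_true (v : ℕ → Bool) (n : ℕ) :
    ctxN (Function.update v n true) (n + 1)
      = insert (PropForm.atom n) (ctxN v n) := by
  ext ψ
  simp only [ctxN, Set.mem_setOf_eq, Set.mem_insert_iff]
  constructor
  · rintro ⟨k, hk, rfl⟩
    rcases Nat.lt_succ_iff_lt_or_eq.1 hk with hk' | rfl
    · right
      exact ⟨k, hk', by simp only [lit]; split_ifs <;> simp_all [PropForm.eval, Function.update_of_ne (Nat.ne_of_lt hk')]⟩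
    · left; simp [lit, PropForm.eval]
  · rintro (rfl | ⟨k, hk, rfl⟩)
    · exact ⟨n, Nat.lt_succ_self n, by simp [lit, PropForm.eval]⟩
    · exact ⟨k, Nat.lt_succ_of_lt hk,
        by simp only [lit]; split_ifs <;> simp_all [PropForm.eval, Function.update_of_ne (Nat.ne_of_lt hk)]⟩

lemma ctxN_update_false (v : ℕ → Bool) (n : ℕ) :
    ctxN (Function.update v n false) (n + 1)
      = insert ((PropForm.atom n).neg) (ctxN v n) := by
  ext ψ
  simp only [ctxN, Set.mem_setOf_eq, Set.mem_insert_iff]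
  constructor
  · rintro ⟨k, hk, rfl⟩
    rcases Nat.lt_succ_iff_lt_or_eq.1 hk with hk' | rfl
    · right
      exact ⟨k, hk', by simp only [lit]; split_ifs <;> simp_all [PropForm.eval, Function.update_of_ne (Nat.ne_of_lt hk')]⟩
    · left; simp [lit, PropForm.eval]
  · rintro (rfl | ⟨k, hk, rfl⟩)
    · exact ⟨n, Nat.lt_succ_self n, by simp [lit, PropForm.eval]⟩
    · exact ⟨k, Nat.lt_succ_of_lt hk,
        by simp only [lit]; split_ifs <;> simp_all [PropForm.eval, Function.update_of_ne (Nat.ne_of_lt hk)]⟩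

lemma ctxN_zero (v : ℕ → Bool) : ctxN v 0 = ∅ := by
  ext ψ; simp [ctxN]

/-- Eliminating the atoms one by one. -/
lemma elimAtoms (β : PropForm) :
    ∀ n : ℕ, (∀ v, LukDeriv (ctxN v n) β) → LukDeriv ∅ β := by
  intro n
  induction n with
  | zero => intro h; have := h (fun _ => true); rwa [ctxN_zero] at this
  | succ n ih =>
    intro h
    apply ih
    intro v
    have h1 : LukDeriv (insert (PropForm.atom n) (ctxN v n)) β := by
      have := h (Function.update v n true)
      rwa [ctxN_update_true] at this
    have h2 : LukDeriv (insert ((PropForm.atom n).neg) (ctxN v n)) β := by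
      have := h (Function.update v n false)
      rwa [ctxN_update_false] at this
    exact .mp (.mp (caseElim _ (PropForm.atom n) β) (ded h1)) (ded h2)

/-- Completeness of Łukasiewicz's system. -/
lemma complete {β : PropForm} (h : β.Tautology) : LukDeriv ∅ β := by
  apply elimAtoms β (bound β)
  intro v
  have := kalmar v (bound β) β le_rfl
  rwa [lit, h v, if_pos rfl] at this

/-- Soundness of Łukasiewicz's system. -/
lemma sound {Γ : Set PropForm} {φ : PropForm} (h : LukDeriv Γ φ)
    (v : ℕ → Bool) (hΓ : ∀ ψ ∈ Γ, ψ.eval v = true) : φ.eval v = true := by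
  induction h with
  | prem h => exact hΓ _ h
  | ax1 φ ψ =>
    simp only [PropForm.eval]
    cases φ.eval v <;> cases ψ.eval v <;> rfl
  | ax2 φ ψ χ =>
    simp only [PropForm.eval]
    cases φ.eval v <;> cases ψ.eval v <;> cases χ.eval v <;> rfl
  | ax3 φ ψ =>
    simp only [PropForm.eval]
    cases φ.eval v <;> cases ψ.eval v <;> rfl
  | mp _ _ ih1 ih2 =>
    simp only [PropForm.eval, ih2] at ih1
    simpa using ih1

/-- Lifting: an Ł-theorem has a justified JLŁ-proof. -/
lemma lift {Γ : Set PropForm} {β : PropForm} (h : LukDeriv Γ β) (hΓ : Γ ⊆ ∅) :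
    ∃ t : JTerm, JLDeriv ∅ (JForm.just t β.toJ) := by
  induction h with
  | prem h => exact absurd (hΓ h) (Set.notMem_empty _)
  | ax1 φ ψ => exact ⟨c1, .jax1 φ.toJ ψ.toJ⟩
  | ax2 φ ψ χ => exact ⟨c2, .jax2 φ.toJ ψ.toJ χ.toJ⟩
  | ax3 φ ψ => exact ⟨c3, .jax3 φ.toJ ψ.toJ⟩
  | mp _ _ ih1 ih2 =>
    obtain ⟨s, hs⟩ := ih1
    obtain ⟨t, ht⟩ := ih2
    exact ⟨s.app t, .appIntro hs ht⟩

/-- The forgetful projection of justification formulas. -/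
def forget : JForm → PropForm
  | .atom n => .atom n
  | .neg φ => (forget φ).neg
  | .imp φ ψ => (forget φ).imp (forget ψ)
  | .just _ φ => forget φ

lemma forget_toJ (β : PropForm) : forget β.toJ = β := by
  induction β with
  | atom n => rfl
  | neg φ ih => simp [PropForm.toJ, forget, ih]
  | imp φ ψ ih1 ih2 => simp [PropForm.toJ, forget, ih1, ih2]

/-- Projection of JLŁ-derivations to Ł-derivations. -/
lemma project {Γ : Set JForm} {χ : JForm} (h : JLDeriv Γ χ) (hΓ : Γ ⊆ ∅) :
    LukDeriv ∅ (forget χ) := by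
  induction h with
  | prem h => exact absurd (hΓ h) (Set.notMem_empty _)
  | appAx s t φ ψ => exact idd ∅ ((forget φ).imp (forget ψ))
  | sumL s t ψ => exact idd ∅ (forget ψ)
  | sumR s t ψ => exact idd ∅ (forget ψ)
  | jax1 φ ψ => exact .ax1 (forget φ) (forget ψ)
  | jax2 φ ψ χ => exact .ax2 (forget φ) (forget ψ) (forget χ)
  | jax3 φ ψ => exact .ax3 (forget φ) (forget ψ)
  | mp _ _ ih1 ih2 => exact .mp ih1 ih2
  | appIntro _ _ ih1 ih2 => exact .mp ih1 ih2

end LukAux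

/-- Soundness and completeness of JLŁ relative to Łukasiewicz's
system, combined form: for every propositional formula `β`, being a classical
tautology, being an Ł-theorem, and having a justified JLŁ-proof are equivalent. -/
theorem tautology_iff_luk_iff_justified (β : PropForm) :
    (β.Tautology ↔ LukDeriv ∅ β) ∧
      (LukDeriv ∅ β ↔ ∃ t : JTerm, JLDeriv ∅ (JForm.just t β.toJ)) := by
  refine ⟨⟨LukAux.complete, fun h v => LukAux.sound h v (by simp)⟩,
    ⟨fun h => LukAux.lift h subset_rfl, ?_⟩⟩
  rintro ⟨t, ht⟩
  have := LukAux.project ht subset_rfl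
  simpa [LukAux.forget, LukAux.forget_toJ] using this
end
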